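/- Let θ ≥ 2 and n ≥ 2 be integers and β > 0. Then tr(exp(−(β/n)·H_n)) = ∑_{σ ∈ S_n} f_n(σ)·θ^{c(σ)}. -/

import Mathlib

open Filter Topology

/-- The transposition operator `T_{xy}`: the permutation matrix of the bijection
`a ↦ a ∘ (x y)` on functions `a : {1,…,n} → {1,…,θ}`. -/
def transpositionMatrix (θ n : ℕ) (x y : Fin n) :
    Matrix (Fin n → Fin θ) (Fin n → Fin θ) ℂ :=
  Matrix.of fun a b => if a ∘ (Equiv.swap x y) = b then 1 else 0

/-- The Hamiltonian `H_n = -∑_{x<y} (T_{xy} - I)`. -/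
noncomputable def hamiltonian (θ n : ℕ) : Matrix (Fin n → Fin θ) (Fin n → Fin θ) ℂ :=
  - ∑ p ∈ Finset.univ.filter (fun p : Fin n × Fin n => p.1 < p.2),
      (transpositionMatrix θ n p.1 p.2 - 1)

/-- `N_k(σ)`: the number of `k`-tuples `(τ_1, …, τ_k)` of transpositions in `S_n`
with `τ_k ∘ ⋯ ∘ τ_1 = σ`. -/
noncomputable def Ntrans (n k : ℕ) (σ : Equiv.Perm (Fin n)) : ℕ := by
  classical exact (Finset.univ.filter (fun τ : Fin k → Equiv.Perm (Fin n) =>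
    (∀ i, (τ i).IsSwap) ∧ (List.ofFn τ).reverse.prod = σ)).card

/-- The probability distribution `f_n` on `S_n`:
`f_n(σ) = e^{−t_n} ∑_{k≥0} (t_n^k/k!)·N_k(σ)/C(n,2)^k` with `t_n = β(n−1)/2`. -/
noncomputable def fdist (β : ℝ) (n : ℕ) (σ : Equiv.Perm (Fin n)) : ℝ :=
  Real.exp (-(β * ((n : ℝ) - 1) / 2)) *
    ∑' k : ℕ, (β * ((n : ℝ) - 1) / 2) ^ k / (Nat.factorial k : ℝ) *
      (Ntrans n k σ : ℝ) / ((n.choose 2 : ℝ)) ^ k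

/-- `c(σ)`: the number of cycles of `σ` (orbits on `{1,…,n}`, including fixed points). -/
def cycleCount (n : ℕ) (σ : Equiv.Perm (Fin n)) : ℕ :=
  σ.cycleType.card + (n - σ.support.card)


open Equiv Matrix Finset

section PermMat
variable (θ n : ℕ)

def permMat (σ : Equiv.Perm (Fin n)) : Matrix (Fin n → Fin θ) (Fin n → Fin θ) ℂ :=
  Matrix.of fun a b => if a ∘ σ = b then 1 else 0

lemma permMat_one : permMat θ n 1 = 1 := by
  ext a b
  simp [permMat, Matrix.one_apply, Function.comp_def]

lemma permMat_mul (σ τ : Equiv.Perm (Fin n)) :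
    permMat θ n (σ * τ) = permMat θ n σ * permMat θ n τ := by
  classical
  ext a b
  simp only [permMat, Matrix.mul_apply, Matrix.of_apply, ite_mul, one_mul, zero_mul]
  rw [Finset.sum_ite_eq Finset.univ (a ∘ σ)]
  simp [Function.comp_assoc, Function.comp_def]
  congr 1

def permHom : Equiv.Perm (Fin n) →* Matrix (Fin n → Fin θ) (Fin n → Fin θ) ℂ where
  toFun := permMat θ n
  map_one' := permMat_one θ n
  map_mul' := permMat_mul θ n

lemma permMat_listProd (k : ℕ) (τ : Fin k → Equiv.Perm (Fin n)) :
    (List.ofFn fun i => permMat θ n (τ i)).prod = permMat θ n (List.ofFn τ).prod := by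
  rw [show (List.ofFn fun i => permMat θ n (τ i)) = (List.ofFn τ).map (permHom θ n) by
    rw [List.map_ofFn]; rfl]
  exact (map_list_prod (permHom θ n) _).symm

end PermMat

lemma ofFn_rev' {α : Type*} : ∀ (k : ℕ) (f : Fin k → α),
    List.ofFn (fun i => f i.rev) = (List.ofFn f).reverse := by
  intro k
  induction k with
  | zero => intro f; simp
  | succ k ih =>
    intro f
    have h0 : (0 : Fin (k+1)).rev = Fin.last k := by simp
    rw [List.ofFn_succ (f := fun i : Fin (k+1) => f i.rev)]
    conv_rhs => rw [List.ofFn_succ' f]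
    rw [List.concat_eq_append, List.reverse_append, List.reverse_singleton,
      ← ih (fun i => f i.castSucc)]
    simp [Fin.rev_succ, h0]

lemma swap_lt_inj {n : ℕ} {x y a b : Fin n} (hxy : x < y) (hab : a < b)
    (h : Equiv.swap x y = Equiv.swap a b) : x = a ∧ y = b := by
  have h1 : Equiv.swap a b x = y := by rw [← h, Equiv.swap_apply_left]
  by_cases hxa : x = a
  · subst hxa
    rw [Equiv.swap_apply_left] at h1
    exact ⟨rfl, h1.symm⟩
  · by_cases hxb : x = b
    · subst hxb
      rw [Equiv.swap_apply_right] at h1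
      exact absurd (hab.trans (hxy.trans_eq h1.symm)) (lt_irrefl _)
    · rw [Equiv.swap_apply_of_ne_of_ne hxa hxb] at h1
      exact absurd h1 (ne_of_lt hxy)

lemma isSwap_exists_pair {n : ℕ} {π : Equiv.Perm (Fin n)} (h : π.IsSwap) :
    ∃ p : Fin n × Fin n, p.1 < p.2 ∧ Equiv.swap p.1 p.2 = π := by
  obtain ⟨x, y, hne, rfl⟩ := h
  rcases hne.lt_or_gt with hl | hl
  · exact ⟨(x, y), hl, rfl⟩
  · exact ⟨(y, x), hl, Equiv.swap_comm _ _⟩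

lemma card_pairs (n : ℕ) :
    (Finset.univ.filter (fun p : Fin n × Fin n => p.1 < p.2)).card = n.choose 2 := by
  have h1 : (Finset.univ.filter (fun p : Fin n × Fin n => p.1 < p.2)).card
      = (Finset.univ.filter (fun p : Fin n × Fin n => p.2 < p.1)).card := by
    apply Finset.card_bij (fun p _ => (p.2, p.1))
    · intro p hp; simp only [Finset.mem_filter] at *; exact ⟨Finset.mem_univ _, hp.2⟩
    · intro p _ q _ h; cases p; cases q; simp at h; simp [h.1, h.2]
    · intro p hp
      refine ⟨(p.2, p.1), ?_, rfl⟩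
      simp only [Finset.mem_filter] at *
      exact ⟨Finset.mem_univ _, hp.2⟩
  have hu : (Finset.univ.filter (fun p : Fin n × Fin n => p.1 < p.2))
      ∪ (Finset.univ.filter (fun p : Fin n × Fin n => p.2 < p.1))
      = Finset.univ.filter (fun p : Fin n × Fin n => p.1 ≠ p.2) := by
    rw [← Finset.filter_or]
    apply Finset.filter_congr
    intro p _
    exact ne_iff_lt_or_gt.symm
  have hdisj : Disjoint (Finset.univ.filter (fun p : Fin n × Fin n => p.1 < p.2))
      (Finset.univ.filter (fun p : Fin n × Fin n => p.2 < p.1)) := by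
    rw [Finset.disjoint_filter]
    intro p _ ha hb; exact absurd (ha.trans hb) (lt_irrefl _)
  have h2 := Finset.card_union_of_disjoint hdisj
  rw [hu] at h2
  have hoff : (Finset.univ.filter (fun p : Fin n × Fin n => p.1 ≠ p.2))
      = (Finset.univ : Finset (Fin n)).offDiag := by
    ext p; simp [Finset.mem_offDiag]
  rw [hoff, Finset.offDiag_card] at h2
  simp only [Finset.card_univ, Fintype.card_fin] at h2
  have h4 : n.choose 2 = n * (n - 1) / 2 := Nat.choose_two_right n
  have h5 : ∃ r, n * (n - 1) = r + r := by
    rcases n with _ | m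
    · exact ⟨0, rfl⟩
    · obtain ⟨r, hr⟩ := Nat.even_mul_succ_self m
      exact ⟨r, by rw [Nat.succ_sub_one, Nat.mul_comm]; exact hr⟩
  obtain ⟨r, hr⟩ := h5
  have hnn : n * (n - 1) = n * n - n := by
    rcases n with _ | m
    · simp
    · simp [Nat.succ_sub_one, Nat.mul_succ, Nat.succ_mul]
  rw [h4]; rw [h1] at h2 ⊢
  omega


lemma fix_zpow {n : ℕ} (σ : Equiv.Perm (Fin n)) {x : Fin n} (hx : σ x = x) (i : ℤ) :
    (σ ^ i) x = x := by
  by_contra hne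
  exact (Equiv.Perm.mem_support.mp
    (Equiv.Perm.support_zpow_le σ i (Equiv.Perm.mem_support.mpr hne))) hx

lemma comp_fix_zpow {θ n : ℕ} (σ : Equiv.Perm (Fin n)) (a : Fin n → Fin θ)
    (ha : a ∘ ⇑σ = a) (i : ℤ) : a ∘ ⇑(σ ^ i) = a := by
  induction i using Int.induction_on with
  | zero => simp
  | succ j ih =>
    rw [_root_.zpow_add_one, Equiv.Perm.coe_mul, ← Function.comp_assoc, ih, ha]
  | pred j ih =>
    rw [_root_.zpow_sub_one, Equiv.Perm.coe_mul, ← Function.comp_assoc, ih]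
    have := congrArg (fun f => f ∘ ⇑σ⁻¹) ha
    simp only [Function.comp_assoc] at this
    rw [← this]
    have : ⇑σ ∘ ⇑σ⁻¹ = id := by
      funext z; simp
    rw [this, Function.comp_id]

lemma nat_card_fixed (θ n : ℕ) (σ : Equiv.Perm (Fin n)) :
    Nat.card {a : Fin n → Fin θ // a ∘ ⇑σ = a} = θ ^ cycleCount n σ := by
  classical
  set s : Setoid (Fin n) :=
    ⟨σ.SameCycle, ⟨fun x => Equiv.Perm.SameCycle.refl σ x,
      fun h => h.symm, fun h h' => h.trans h'⟩⟩ with hs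
  have e1 : {a : Fin n → Fin θ // a ∘ ⇑σ = a} ≃ (Quotient s → Fin θ) :=
    { toFun := fun a => Quotient.lift a.1 (fun x y h => by
        obtain ⟨i, hi⟩ := h
        rw [← hi]
        exact (congrFun (comp_fix_zpow σ a.1 a.2 i) x).symm)
      invFun := fun b => ⟨fun x => b (Quotient.mk s x), by
        funext x
        exact congrArg b (Quotient.sound ⟨-1, by simp⟩)⟩
      left_inv := fun a => Subtype.ext rfl
      right_inv := fun b => by
        funext q
        induction q using Quotient.ind
        rfl }
  set g0 : Fin n → ({c // c ∈ σ.cycleFactorsFinset} ⊕ {x : Fin n // σ x = x}) :=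
    (fun x => if h : σ x = x then Sum.inr ⟨x, h⟩
      else Sum.inl ⟨σ.cycleOf x,
        (Equiv.Perm.cycleOf_mem_cycleFactorsFinset_iff).mpr (Equiv.Perm.mem_support.mpr h)⟩)
    with hg0
  have wd : ∀ x y : Fin n, σ.SameCycle x y → g0 x = g0 y := by
    intro x y h
    by_cases hx : σ x = x
    · have hyx : y = x := by
        obtain ⟨i, hi⟩ := h
        rw [← hi, fix_zpow σ hx i]
      subst hyx; rfl
    · by_cases hy : σ y = y
      · have hxy : x = y := by
          obtain ⟨i, hi⟩ := h.symm
          rw [← hi, fix_zpow σ hy i]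
        subst hxy; rfl
      · simp only [hg0, dif_neg hx, dif_neg hy]
        exact congrArg _ (Subtype.ext h.cycleOf_eq)
  have e2 : Quotient s ≃ ({c // c ∈ σ.cycleFactorsFinset} ⊕ {x : Fin n // σ x = x}) := by
    refine Equiv.ofBijective (Quotient.lift g0 wd) ⟨?_, ?_⟩
    · intro q1 q2
      refine Quotient.inductionOn₂ q1 q2 ?_
      intro x y hgg
      simp only [Quotient.lift_mk] at hgg
      apply Quotient.sound
      by_cases hx : σ x = x
      · by_cases hy : σ y = y
        · simp only [hg0, dif_pos hx, dif_pos hy, Sum.inr.injEq, Subtype.mk.injEq] at hgg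
          exact hgg ▸ Equiv.Perm.SameCycle.refl σ x
        · simp only [hg0, dif_pos hx, dif_neg hy] at hgg
          exact absurd hgg (by simp)
      · by_cases hy : σ y = y
        · simp only [hg0, dif_neg hx, dif_pos hy] at hgg
          exact absurd hgg (by simp)
        · simp only [hg0, dif_neg hx, dif_neg hy, Sum.inl.injEq, Subtype.mk.injEq] at hgg
          show σ.SameCycle x y
          by_contra hsc
          have h1 : σ.cycleOf x y = y := by
            rw [Equiv.Perm.cycleOf_apply, if_neg hsc]
          rw [hgg, Equiv.Perm.cycleOf_apply_self] at h1
          exact hy h1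
    · rintro (⟨c, hc⟩ | ⟨x, hx⟩)
      · obtain ⟨hcyc, hsupp⟩ := Equiv.Perm.mem_cycleFactorsFinset_iff.mp hc
        obtain ⟨x, hx1, -⟩ := hcyc
        have hxs : x ∈ c.support := Equiv.Perm.mem_support.mpr hx1
        have hσx : σ x ≠ x := by
          rw [← hsupp x hxs]; exact hx1
        refine ⟨Quotient.mk s x, ?_⟩
        show g0 x = _
        simp only [hg0, dif_neg hσx]
        exact congrArg _ (Subtype.ext (Equiv.Perm.cycle_is_cycleOf hxs hc).symm)
      · exact ⟨Quotient.mk s x, by show g0 x = _; simp only [hg0, dif_pos hx]⟩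
  have hfac : Nat.card {c // c ∈ σ.cycleFactorsFinset} = σ.cycleType.card := by
    rw [Nat.card_eq_fintype_card, Fintype.card_coe, Equiv.Perm.cycleType_def,
      Multiset.card_map]
    rfl
  have hfix : Nat.card {x : Fin n // σ x = x} = n - σ.support.card := by
    rw [Nat.card_eq_fintype_card, Fintype.card_subtype]
    have hsup : σ.support = Finset.univ.filter (fun x : Fin n => ¬ σ x = x) := by
      ext x; simp [Equiv.Perm.mem_support]
    have h1 := Finset.card_filter_add_card_filter_not
      (s := (Finset.univ : Finset (Fin n))) (p := fun x => σ x = x)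
    simp only [Finset.card_univ, Fintype.card_fin] at h1
    rw [hsup]
    omega
  calc Nat.card {a : Fin n → Fin θ // a ∘ ⇑σ = a}
      = Nat.card (Quotient s → Fin θ) := Nat.card_congr e1
    _ = Nat.card (Fin θ) ^ Nat.card (Quotient s) := Nat.card_fun
    _ = θ ^ cycleCount n σ := by
        rw [Nat.card_eq_fintype_card, Fintype.card_fin, Nat.card_congr e2, Nat.card_sum,
          hfac, hfix, cycleCount]

lemma trace_permMat (θ n : ℕ) (σ : Equiv.Perm (Fin n)) :
    Matrix.trace (permMat θ n σ) = (θ : ℂ) ^ cycleCount n σ := by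
  classical
  rw [Matrix.trace]
  have : ∀ a : Fin n → Fin θ, (permMat θ n σ).diag a = if a ∘ ⇑σ = a then (1:ℂ) else 0 :=
    fun a => rfl
  rw [Finset.sum_congr rfl (fun a _ => this a), Finset.sum_boole]
  rw [← Fintype.card_subtype, ← Nat.card_eq_fintype_card, nat_card_fixed θ n σ]
  push_cast
  ring

lemma sum_pow_tuples {R X : Type*} [Semiring R] [Fintype X] (f : X → R) (k : ℕ) :
    (∑ x : X, f x) ^ k = ∑ g : Fin k → X, (List.ofFn fun i => f (g i)).prod := by
  induction k with
  | zero => simp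
  | succ k ih =>
    rw [pow_succ', ih, Finset.mul_sum]
    rw [← Equiv.sum_comp (Fin.consEquiv (fun _ : Fin (k+1) => X))
      (fun g : Fin (k+1) → X => (List.ofFn fun i => f (g i)).prod), Fintype.sum_prod_type]
    rw [Finset.sum_comm]
    apply Finset.sum_congr rfl
    intro g _
    rw [Finset.sum_mul]
    apply Finset.sum_congr rfl
    intro x _
    simp [Fin.consEquiv, List.ofFn_succ]

abbrev pairsF (n : ℕ) : Finset (Fin n × Fin n) :=
  Finset.univ.filter fun p : Fin n × Fin n => p.1 < p.2

lemma pairs_lt {n : ℕ} (q : {p : Fin n × Fin n // p ∈ pairsF n}) :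
    (q : Fin n × Fin n).1 < (q : Fin n × Fin n).2 :=
  (Finset.mem_filter.mp q.2).2

lemma card_filter_eq_Ntrans (n k : ℕ) (σ : Equiv.Perm (Fin n)) :
    (Finset.univ.filter (fun g : Fin k → {p : Fin n × Fin n // p ∈ pairsF n} =>
      (List.ofFn fun i => Equiv.swap ((g i) : Fin n × Fin n).1 ((g i) : Fin n × Fin n).2).prod
        = σ)).card = Ntrans n k σ := by
  classical
  rw [Ntrans]
  apply Finset.card_bij
    (fun g _ => fun j : Fin k =>
      Equiv.swap ((g j.rev) : Fin n × Fin n).1 ((g j.rev) : Fin n × Fin n).2)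
  · intro g hg
    rw [Finset.mem_filter]
    refine ⟨Finset.mem_univ _, fun i => ⟨_, _, (pairs_lt _).ne, rfl⟩, ?_⟩
    rw [ofFn_rev' k (fun j => Equiv.swap ((g j) : Fin n × Fin n).1 ((g j) : Fin n × Fin n).2),
      List.reverse_reverse]
    exact (Finset.mem_filter.mp hg).2
  · intro g hg g' hg' h
    funext j
    have h2 := congrFun h j.rev
    simp only [Fin.rev_rev] at h2
    obtain ⟨h3, h4⟩ := swap_lt_inj (pairs_lt (g j)) (pairs_lt (g' j)) h2
    exact Subtype.ext (Prod.ext h3 h4)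
  · intro τ hτ
    rw [Finset.mem_filter] at hτ
    obtain ⟨-, hsw, hprod⟩ := hτ
    refine ⟨fun j => ⟨(isSwap_exists_pair (hsw j.rev)).choose,
      Finset.mem_filter.mpr ⟨Finset.mem_univ _, (isSwap_exists_pair (hsw j.rev)).choose_spec.1⟩⟩,
      ?_, ?_⟩
    · rw [Finset.mem_filter]
      refine ⟨Finset.mem_univ _, ?_⟩
      have : (fun i : Fin k =>
          Equiv.swap ((isSwap_exists_pair (hsw i.rev)).choose).1
            ((isSwap_exists_pair (hsw i.rev)).choose).2) = fun i : Fin k => τ i.rev := by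
        funext i
        exact (isSwap_exists_pair (hsw i.rev)).choose_spec.2
      show (List.ofFn _).prod = σ
      rw [show (List.ofFn fun i : Fin k =>
          Equiv.swap ((isSwap_exists_pair (hsw i.rev)).choose).1
            ((isSwap_exists_pair (hsw i.rev)).choose).2) = List.ofFn fun i : Fin k => τ i.rev
          from congrArg List.ofFn this,
        ofFn_rev' k τ, ← hprod]
    · funext j
      have := (isSwap_exists_pair (hsw j.rev.rev)).choose_spec.2
      simp only [Fin.rev_rev] at this ⊢
      exact this

lemma Ntrans_le (n k : ℕ) (σ : Equiv.Perm (Fin n)) : Ntrans n k σ ≤ (n.choose 2) ^ k := by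
  classical
  rw [← card_filter_eq_Ntrans]
  calc (Finset.univ.filter _).card ≤ (Finset.univ :
        Finset (Fin k → {p : Fin n × Fin n // p ∈ pairsF n})).card :=
        Finset.card_le_card (Finset.filter_subset _ _)
    _ = (n.choose 2) ^ k := by
        rw [Finset.card_univ, Fintype.card_fun, Fintype.card_coe, card_pairs, Fintype.card_fin]

lemma trace_M_pow (θ n k : ℕ) :
    Matrix.trace ((∑ p ∈ pairsF n, permMat θ n (Equiv.swap p.1 p.2)) ^ k)
      = ∑ σ : Equiv.Perm (Fin n),
          (Ntrans n k σ : ℂ) * (θ : ℂ) ^ cycleCount n σ := by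
  classical
  rw [← Finset.sum_coe_sort (pairsF n) (fun p => permMat θ n (Equiv.swap p.1 p.2))]
  rw [sum_pow_tuples (fun q : {p : Fin n × Fin n // p ∈ pairsF n} =>
    permMat θ n (Equiv.swap (q : Fin n × Fin n).1 (q : Fin n × Fin n).2)) k]
  rw [Matrix.trace_sum]
  have hterm : ∀ g : Fin k → {p : Fin n × Fin n // p ∈ pairsF n},
      Matrix.trace (List.ofFn fun i => permMat θ n
          (Equiv.swap ((g i) : Fin n × Fin n).1 ((g i) : Fin n × Fin n).2)).prod
        = (θ : ℂ) ^ cycleCount n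
            (List.ofFn fun i =>
              Equiv.swap ((g i) : Fin n × Fin n).1 ((g i) : Fin n × Fin n).2).prod := by
    intro g
    rw [permMat_listProd θ n k, trace_permMat]
  rw [Finset.sum_congr rfl (fun g _ => hterm g)]
  have hf := Finset.sum_fiberwise_eq_sum_filter Finset.univ Finset.univ
    (fun g : Fin k → {p : Fin n × Fin n // p ∈ pairsF n} =>
      (List.ofFn fun i =>
        Equiv.swap ((g i) : Fin n × Fin n).1 ((g i) : Fin n × Fin n).2).prod)
    (fun g => (θ : ℂ) ^ cycleCount n
      (List.ofFn fun i =>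
        Equiv.swap ((g i) : Fin n × Fin n).1 ((g i) : Fin n × Fin n).2).prod)
  simp only [Finset.mem_univ, Finset.filter_true] at hf
  rw [← hf]
  apply Finset.sum_congr rfl
  intro σ _
  have : ∀ g ∈ Finset.univ.filter (fun g : Fin k → {p : Fin n × Fin n // p ∈ pairsF n} =>
      (List.ofFn fun i =>
        Equiv.swap ((g i) : Fin n × Fin n).1 ((g i) : Fin n × Fin n).2).prod = σ),
      (θ : ℂ) ^ cycleCount n
        (List.ofFn fun i =>
          Equiv.swap ((g i) : Fin n × Fin n).1 ((g i) : Fin n × Fin n).2).prod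
        = (θ : ℂ) ^ cycleCount n σ := by
    intro g hg
    rw [(Finset.mem_filter.mp hg).2]
  rw [Finset.sum_congr rfl this, Finset.sum_const, card_filter_eq_Ntrans,
    nsmul_eq_mul]

section MatrixExp
variable {m : Type*} [Fintype m] [DecidableEq m]

lemma trace_exp_tsum (A : Matrix m m ℂ) :
    Matrix.trace (NormedSpace.exp A)
      = ∑' k : ℕ, ((k.factorial : ℂ))⁻¹ * Matrix.trace (A ^ k) := by
  have hc : Continuous (Matrix.trace : Matrix m m ℂ → ℂ) :=
    continuous_finset_sum _ (fun i _ => (continuous_apply i).comp (continuous_apply i))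
  letI : SeminormedRing (Matrix m m ℂ) := Matrix.linftyOpSemiNormedRing
  letI : NormedRing (Matrix m m ℂ) := Matrix.linftyOpNormedRing
  letI : NormedAlgebra ℂ (Matrix m m ℂ) := Matrix.linftyOpNormedAlgebra
  have h := NormedSpace.exp_series_hasSum_exp' (𝕂 := ℂ) A
  have h2 := h.map (Matrix.traceLinearMap m ℂ ℂ) hc
  have h3 := h2.tsum_eq
  simp only [Matrix.traceLinearMap, LinearMap.coe_mk, AddHom.coe_mk] at h3
  refine h3.symm.trans ?_
  apply tsum_congr
  intro k
  simp only [Function.comp_apply]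
  rw [Matrix.trace_smul, smul_eq_mul]

lemma exp_smul_one (c : ℂ) :
    NormedSpace.exp (c • (1 : Matrix m m ℂ)) = NormedSpace.exp c • (1 : Matrix m m ℂ) := by
  have h := NormedSpace.exp_series_hasSum_exp' (𝕂 := ℂ) c
  have h2 := h.smul_const (1 : Matrix m m ℂ)
  rw [NormedSpace.exp_eq_tsum ℂ]
  rw [← h2.tsum_eq]
  apply tsum_congr
  intro k
  rw [smul_pow, one_pow, smul_smul, smul_eq_mul]

lemma exp_split (c : ℂ) (B : Matrix m m ℂ) :
    NormedSpace.exp (B + c • (1 : Matrix m m ℂ))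
      = NormedSpace.exp c • NormedSpace.exp B := by
  rw [Matrix.exp_add_of_commute]
  · rw [exp_smul_one, Matrix.mul_smul, Matrix.mul_one]
  · exact (Commute.one_right B).smul_right c

lemma summable_w (θ n : ℕ) (hn : 2 ≤ n) (β : ℝ) (hβ : 0 < β) (σ : Equiv.Perm (Fin n)) :
    Summable (fun k : ℕ => (β * ((n : ℝ) - 1) / 2) ^ k / (Nat.factorial k : ℝ) *
      (Ntrans n k σ : ℝ) / ((n.choose 2 : ℝ)) ^ k * (θ : ℝ) ^ cycleCount n σ) := by
  have hn2 : (2:ℝ) ≤ (n:ℝ) := by exact_mod_cast hn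
  have ht0 : 0 ≤ β * ((n : ℝ) - 1) / 2 := by nlinarith
  have hC0 : (0:ℝ) < ((n.choose 2 : ℕ) : ℝ) := by
    have : 0 < n.choose 2 := Nat.choose_pos (by omega)
    exact_mod_cast this
  apply Summable.of_nonneg_of_le ?_ ?_
    ((Real.summable_pow_div_factorial (β * ((n : ℝ) - 1) / 2)).mul_right
      ((θ : ℝ) ^ cycleCount n σ))
  · intro k
    positivity
  · intro k
    have hN : ((Ntrans n k σ : ℕ) : ℝ) ≤ ((n.choose 2 : ℕ) : ℝ) ^ k := by
      exact_mod_cast Ntrans_le n k σ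
    have h1 : (β * ((n : ℝ) - 1) / 2) ^ k / (Nat.factorial k : ℝ) *
        (Ntrans n k σ : ℝ) / ((n.choose 2 : ℝ)) ^ k * (θ : ℝ) ^ cycleCount n σ
        = (β * ((n : ℝ) - 1) / 2) ^ k / (Nat.factorial k : ℝ) *
          ((Ntrans n k σ : ℝ) / ((n.choose 2 : ℝ)) ^ k) * (θ : ℝ) ^ cycleCount n σ := by
      ring
    rw [h1]
    have h2 : (Ntrans n k σ : ℝ) / ((n.choose 2 : ℝ)) ^ k ≤ 1 :=
      (div_le_one (by positivity)).mpr hN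
    have h3 : (0:ℝ) ≤ (β * ((n : ℝ) - 1) / 2) ^ k / (Nat.factorial k : ℝ) := by positivity
    have h4 : (0:ℝ) ≤ (θ : ℝ) ^ cycleCount n σ := by positivity
    nlinarith [mul_le_of_le_one_right h3 h2]

lemma rhs_eval (θ n : ℕ) (hn : 2 ≤ n) (β : ℝ) (hβ : 0 < β) :
    ∑ σ : Equiv.Perm (Fin n), fdist β n σ * (θ : ℝ) ^ cycleCount n σ
      = Real.exp (-(β * ((n : ℝ) - 1) / 2)) *
          ∑' k : ℕ, (β / (n:ℝ)) ^ k / (k.factorial : ℝ) *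
            ∑ σ : Equiv.Perm (Fin n), (Ntrans n k σ : ℝ) * (θ:ℝ) ^ cycleCount n σ := by
  have hn0 : (n:ℝ) ≠ 0 := by
    have : (0:ℝ) < (n:ℝ) := by exact_mod_cast Nat.lt_of_lt_of_le (by norm_num) hn
    exact this.ne'
  have hn2 : (2:ℝ) ≤ (n:ℝ) := by exact_mod_cast hn
  have hC0 : (0:ℝ) < ((n.choose 2 : ℕ) : ℝ) := by
    have : 0 < n.choose 2 := Nat.choose_pos (by omega)
    exact_mod_cast this
  have hC : ((n.choose 2 : ℕ) : ℝ) = (n:ℝ) * ((n:ℝ) - 1) / 2 := Nat.cast_choose_two (K := ℝ) n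
  have hn1 : ((n:ℝ) - 1) ≠ 0 := by nlinarith
  have htC : (β * ((n : ℝ) - 1) / 2) / ((n.choose 2 : ℕ) : ℝ) = β / (n:ℝ) := by
    rw [hC]
    rw [div_eq_div_iff (div_ne_zero (mul_ne_zero hn0 hn1) two_ne_zero) hn0]
    ring
  have step1 : ∑ σ : Equiv.Perm (Fin n), fdist β n σ * (θ : ℝ) ^ cycleCount n σ
      = Real.exp (-(β * ((n : ℝ) - 1) / 2)) *
        ∑ σ : Equiv.Perm (Fin n),
          ∑' k : ℕ, (β * ((n : ℝ) - 1) / 2) ^ k / (Nat.factorial k : ℝ) *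
            (Ntrans n k σ : ℝ) / ((n.choose 2 : ℝ)) ^ k * (θ : ℝ) ^ cycleCount n σ := by
    rw [Finset.mul_sum]
    apply Finset.sum_congr rfl
    intro σ _
    rw [fdist, mul_assoc, tsum_mul_right]
  rw [step1]
  congr 1
  rw [← Summable.tsum_finsetSum (fun σ _ => summable_w θ n hn β hβ σ)]
  apply tsum_congr
  intro k
  rw [Finset.mul_sum]
  apply Finset.sum_congr rfl
  intro σ _
  rw [← htC, div_pow]
  have hk : (Nat.factorial k : ℝ) ≠ 0 := by
    exact_mod_cast (Nat.factorial_pos k).ne'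
  simp only [div_pow, mul_pow]
  ring

/-- `tr(exp(−(β/n)·H_n)) = ∑_{σ ∈ S_n} f_n(σ)·θ^{c(σ)}`. -/
theorem stmt1 (θ n : ℕ) (hθ : 2 ≤ θ) (hn : 2 ≤ n) (β : ℝ) (hβ : 0 < β) :
    Matrix.trace (NormedSpace.exp ((-(β / (n : ℝ)) : ℂ) • hamiltonian θ n))
      = ((∑ σ : Equiv.Perm (Fin n), fdist β n σ * (θ : ℝ) ^ cycleCount n σ : ℝ) : ℂ) := by
  classical
  have hn0 : (n:ℝ) ≠ 0 := by
    have : (0:ℝ) < (n:ℝ) := by exact_mod_cast Nat.lt_of_lt_of_le (by norm_num) hn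
    exact this.ne'
  have hn2 : (2:ℝ) ≤ (n:ℝ) := by exact_mod_cast hn
  have hn1 : ((n:ℝ) - 1) ≠ 0 := by nlinarith
  -- Step A: rewrite the Hamiltonian
  have hham : hamiltonian θ n
      = ((n.choose 2 : ℕ) : ℂ) • (1 : Matrix (Fin n → Fin θ) (Fin n → Fin θ) ℂ)
        - ∑ p ∈ pairsF n, permMat θ n (Equiv.swap p.1 p.2) := by
    rw [hamiltonian, Finset.sum_sub_distrib, Finset.sum_const, card_pairs, neg_sub]
    congr 1
    rw [← Nat.cast_smul_eq_nsmul ℂ]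
  have hn0c : ((n:ℕ):ℂ) ≠ 0 := Nat.cast_ne_zero.mpr (by omega)
  have hA : (-(β / (n : ℝ)) : ℂ) • hamiltonian θ n
      = (((β / (n:ℝ)) : ℝ) : ℂ) • (∑ p ∈ pairsF n, permMat θ n (Equiv.swap p.1 p.2))
        + (-(((β * ((n : ℝ) - 1) / 2 : ℝ)) : ℂ)) • 1 := by
    rw [hham, Nat.cast_choose_two (K := ℂ)]
    push_cast
    match_scalars <;> (field_simp; try ring)
  rw [hA, exp_split, Matrix.trace_smul, smul_eq_mul, trace_exp_tsum]
  have hexp : NormedSpace.exp (-(((β * ((n : ℝ) - 1) / 2 : ℝ)) : ℂ))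
      = ((Real.exp (-(β * ((n : ℝ) - 1) / 2)) : ℝ) : ℂ) := by
    rw [← Complex.exp_eq_exp_ℂ, ← Complex.ofReal_neg, Complex.ofReal_exp]
  rw [hexp]
  -- termwise identification of the series
  have hterm : ∀ k : ℕ, ((k.factorial : ℂ))⁻¹ *
      Matrix.trace (((((β / (n:ℝ)) : ℝ) : ℂ) •
        (∑ p ∈ pairsF n, permMat θ n (Equiv.swap p.1 p.2))) ^ k)
      = (((β / (n:ℝ)) ^ k / (k.factorial : ℝ) *
          ∑ σ : Equiv.Perm (Fin n), (Ntrans n k σ : ℝ) * (θ:ℝ) ^ cycleCount n σ : ℝ) : ℂ) := by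
    intro k
    rw [smul_pow, Matrix.trace_smul, smul_eq_mul, trace_M_pow]
    push_cast
    ring
  rw [tsum_congr hterm]
  -- summability of the real series
  have hFsum : Summable (fun k : ℕ => (β / (n:ℝ)) ^ k / (k.factorial : ℝ) *
      ∑ σ : Equiv.Perm (Fin n), (Ntrans n k σ : ℝ) * (θ:ℝ) ^ cycleCount n σ) := by
    have heq : (fun k : ℕ => (β / (n:ℝ)) ^ k / (k.factorial : ℝ) *
        ∑ σ : Equiv.Perm (Fin n), (Ntrans n k σ : ℝ) * (θ:ℝ) ^ cycleCount n σ)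
        = fun k : ℕ => ∑ σ : Equiv.Perm (Fin n),
            (β * ((n : ℝ) - 1) / 2) ^ k / (Nat.factorial k : ℝ) *
              (Ntrans n k σ : ℝ) / ((n.choose 2 : ℝ)) ^ k * (θ : ℝ) ^ cycleCount n σ := by
      funext k
      have hC : ((n.choose 2 : ℕ) : ℝ) = (n:ℝ) * ((n:ℝ) - 1) / 2 :=
        Nat.cast_choose_two (K := ℝ) n
      have htC : (β * ((n : ℝ) - 1) / 2) / ((n.choose 2 : ℕ) : ℝ) = β / (n:ℝ) := by
        rw [hC, div_eq_div_iff (div_ne_zero (mul_ne_zero hn0 hn1) two_ne_zero) hn0]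
        ring
      rw [Finset.mul_sum]
      apply Finset.sum_congr rfl
      intro σ _
      rw [← htC, div_pow]
      have hC0 : (0:ℝ) < ((n.choose 2 : ℕ) : ℝ) := by
        have : 0 < n.choose 2 := Nat.choose_pos (by omega)
        exact_mod_cast this
      have hk : (Nat.factorial k : ℝ) ≠ 0 := by
        exact_mod_cast (Nat.factorial_pos k).ne'
      field_simp
    rw [heq]
    exact summable_sum (fun σ _ => summable_w θ n hn β hβ σ)
  have hcast : ∑' k : ℕ, (((β / (n:ℝ)) ^ k / (k.factorial : ℝ) *
      ∑ σ : Equiv.Perm (Fin n), (Ntrans n k σ : ℝ) * (θ:ℝ) ^ cycleCount n σ : ℝ) : ℂ)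
      = ((∑' k : ℕ, (β / (n:ℝ)) ^ k / (k.factorial : ℝ) *
          ∑ σ : Equiv.Perm (Fin n), (Ntrans n k σ : ℝ) * (θ:ℝ) ^ cycleCount n σ : ℝ) : ℂ) := by
    have h := (hFsum.hasSum.mapL Complex.ofRealCLM).tsum_eq
    simpa using h
  rw [hcast, rhs_eval θ n hn β hβ]
  push_cast
  ring
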